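/- Let X_1, X_2, X_3 be independent Boolean random variables where X_1 and X_2 each take the value true with probability 1/3 and X_3 takes the value true with probability p ∈ [0,1]. Then the probability that exactly one of X_1, X_2, X_3 is true equals 4/9, independently of the value of p. -/

import Mathlib

open MeasureTheory ProbabilityTheory

/-- Three independent Boolean random variables: two true with probability `1/3`, and one
true with probability `p ∈ [0,1]`. The probability that exactly one is true is `4/9`,
regardless of `p`. -/
theorem aht_win_prob {Ω : Type*} [MeasurableSpace Ω]
    (μ : Measure Ω) [IsProbabilityMeasure μ]
    (X : Fin 3 → Ω → Bool)
    (hmeas : ∀ i, Measurable (X i))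
    (hindep : iIndepFun X μ)
    (p : ℝ) (hp0 : 0 ≤ p) (hp1 : p ≤ 1)
    (hX0 : (μ {ω | X 0 ω = true}).toReal = 1 / 3)
    (hX1 : (μ {ω | X 1 ω = true}).toReal = 1 / 3)
    (hX2 : (μ {ω | X 2 ω = true}).toReal = p) :
    (μ {ω | ∃! i, X i ω = true}).toReal = 4 / 9 := by
  classical
  set A : Fin 3 → Bool → Set Ω := fun i b => X i ⁻¹' {b} with hA
  have hAmeas : ∀ i b, MeasurableSet (A i b) := fun i b =>
    (hmeas i) (measurableSet_singleton b)
  have hmul : ∀ b : Fin 3 → Bool,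
      μ (⋂ i, A i (b i)) = ∏ i, μ (A i (b i)) := by
    intro b
    have := hindep.measure_inter_preimage_eq_mul
      Finset.univ (sets := fun i => {b i}) (fun i _ => measurableSet_singleton _)
    simpa using this
  have hfalse : ∀ i, A i false = (A i true)ᶜ := by
    intro i
    ext ω
    simp [hA, Set.mem_preimage]
  have hft : ∀ i, (μ (A i false)).toReal = 1 - (μ (A i true)).toReal := by
    intro i
    rw [hfalse i, prob_compl_eq_one_sub (hAmeas i true),
      ENNReal.toReal_sub_of_le prob_le_one ENNReal.one_ne_top, ENNReal.toReal_one]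
  have h0t : (μ (A 0 true)).toReal = 1 / 3 := hX0
  have h1t : (μ (A 1 true)).toReal = 1 / 3 := hX1
  have h2t : (μ (A 2 true)).toReal = p := hX2
  -- decompose the event
  have hE : {ω | ∃! i, X i ω = true} =
      (⋂ i, A i (![true, false, false] i)) ∪
      ((⋂ i, A i (![false, true, false] i)) ∪ (⋂ i, A i (![false, false, true] i))) := by
    ext ω
    cases h0 : X 0 ω <;> cases h1 : X 1 ω <;> cases h2 : X 2 ω <;>
      simp [ExistsUnique, Set.mem_iInter, hA, Fin.forall_fin_succ, Fin.exists_fin_succ,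
        h0, h1, h2, Fin.forall_fin_zero_pi]
  have hI : ∀ b : Fin 3 → Bool, (μ (⋂ i, A i (b i))).toReal =
      (μ (A 0 (b 0))).toReal * (μ (A 1 (b 1))).toReal * (μ (A 2 (b 2))).toReal := by
    intro b
    rw [hmul b, Fin.prod_univ_three, ENNReal.toReal_mul, ENNReal.toReal_mul]
  have hmI : ∀ b : Fin 3 → Bool, MeasurableSet (⋂ i, A i (b i)) := fun b =>
    MeasurableSet.iInter fun i => hAmeas i (b i)
  have hdisj1 : Disjoint (⋂ i, A i (![true, false, false] i))
      ((⋂ i, A i (![false, true, false] i)) ∪ (⋂ i, A i (![false, false, true] i))) := by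
    rw [Set.disjoint_union_right]
    constructor <;>
    · rw [Set.disjoint_left]
      intro ω hω hω'
      have h1 := Set.mem_iInter.mp hω 0
      have h2 := Set.mem_iInter.mp hω' 0
      simp [hA] at h1 h2
      rw [h1] at h2; exact Bool.noConfusion h2
  have hdisj2 : Disjoint (⋂ i, A i (![false, true, false] i))
      (⋂ i, A i (![false, false, true] i)) := by
    rw [Set.disjoint_left]
    intro ω hω hω'
    have h1 := Set.mem_iInter.mp hω 1
    have h2 := Set.mem_iInter.mp hω' 1
    simp [hA] at h1 h2
    rw [h1] at h2; exact Bool.noConfusion h2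
  rw [hE, measure_union hdisj1 ((hmI _).union (hmI _)), measure_union hdisj2 (hmI _),
    ENNReal.toReal_add (measure_ne_top _ _) (by finiteness),
    ENNReal.toReal_add (measure_ne_top _ _) (measure_ne_top _ _),
    hI, hI, hI]
  simp only [Matrix.cons_val_zero, Matrix.cons_val_one, Matrix.head_cons,
    Matrix.cons_val_two, Matrix.tail_cons]
  rw [hft 0, hft 1, hft 2, h0t, h1t, h2t]
  ring
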